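/- Let p be an odd prime and m ≥ 2. Set n = p^{m-1} - 1, d = p^{m-2}(p-1), M = p^{m-1} - 1, ω_0 = p^{m-2} - 1, and ω_β = p^{m-2} for each of the p-1 nonzero β ∈ F_p. Then n·d - n² + ω_0² + (p-1)·(p^{m-2})² > 0 and M · (n·d - n² + ω_0² + (p-1)·(p^{m-2})²) = n·d; that is, the constant composition code C_0' meets the LFVC bound M ≤ nd/(nd - n² + Σ_{β∈F_p} ω_β²) with equality. -/
import Mathlib

/-- Let `p` be an odd prime and `m ≥ 2`. With `n = p^(m-1) - 1`, `d = p^(m-2)(p-1)`,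
`M = p^(m-1) - 1`, `ω₀ = p^(m-2) - 1`, and `ω_β = p^(m-2)` for each of the `p - 1` nonzero
`β ∈ F_p`, the constant composition code `C_0'` meets the LFVC bound with equality:
`n·d - n² + ω₀² + (p-1)·(p^(m-2))² > 0` and
`M · (n·d - n² + ω₀² + (p-1)·(p^(m-2))²) = n·d`. -/
theorem lfvc_optimal
    (p : ℕ) (hp : p.Prime) (hp2 : p ≠ 2) (m : ℕ) (hm : 2 ≤ m)
    (n d M ω₀ : ℤ)
    (hn : n = (p : ℤ) ^ (m - 1) - 1)
    (hd : d = (p : ℤ) ^ (m - 2) * (p - 1))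
    (hM : M = (p : ℤ) ^ (m - 1) - 1)
    (hω₀ : ω₀ = (p : ℤ) ^ (m - 2) - 1) :
    0 < n * d - n ^ 2 + ω₀ ^ 2 + ((p : ℤ) - 1) * ((p : ℤ) ^ (m - 2)) ^ 2 ∧
    M * (n * d - n ^ 2 + ω₀ ^ 2 + ((p : ℤ) - 1) * ((p : ℤ) ^ (m - 2)) ^ 2) = n * d := by
  obtain ⟨k, rfl⟩ : ∃ k, m = k + 2 := ⟨m - 2, by omega⟩
  have h1 : k + 2 - 1 = k + 1 := rfl
  have h2 : k + 2 - 2 = k := rfl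
  rw [h1] at hn hM
  rw [h2] at hd hω₀
  have hps : (2 : ℤ) < (p : ℤ) := by
    have := hp.two_le
    have : 2 ≤ p := this
    have hne : p ≠ 2 := hp2
    exact_mod_cast by omega
  have hq : (0 : ℤ) < (p : ℤ) ^ k := by positivity
  have hE : n * d - n ^ 2 + ω₀ ^ 2 + ((p : ℤ) - 1) * ((p : ℤ) ^ (k + 2 - 2)) ^ 2
      = (p : ℤ) ^ k * ((p : ℤ) - 1) := by
    rw [h2]; subst hn hd hω₀; rw [pow_succ]; ring
  constructor
  · rw [hE]; have : (0 : ℤ) < (p : ℤ) - 1 := by linarith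
    positivity
  · rw [hE]; subst hM hn hd; rw [pow_succ]
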